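/- Let B be a Boolean subalgebra of the power set of ω1 containing all finite subsets of ω1, let L be a Stone space of B with clopen correspondence X ↦ [X], let (X_γ)_{γ<ω2} be a strong almost disjoint family with all X_γ ∈ B, and let (μ_ξ)_{ξ<ω1} be a family of finite regular signed Borel measures on L. Then there exists γ' < ω2 such that for every γ with γ' < γ < ω2, every ξ < ω1, and every X ∈ B with X ⊆ X_γ, one has μ_ξ([X]) = μ_ξ(⋃_{λ∈X} [{λ}]). -/

import Mathlib

open Cardinal MeasureTheory


universe uu vv in
open Cardinal in
private lemma stmt12_aux {α : Type uu} {ι : Type vv} [Nonempty ι] (f : ι → Set α)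
    (hcf : ∀ i, (f i).Countable) (hι : #ι ≤ Cardinal.aleph.{vv} 1) :
    #(⋃ i, f i) < Cardinal.aleph.{uu} 2 := by
  have h2 : Cardinal.lift.{vv} #(⋃ i, f i) <
      Cardinal.lift.{vv} (Cardinal.aleph.{uu} 2) := by
    have h1 : Cardinal.lift.{vv} #(⋃ i, f i) ≤
        Cardinal.lift.{uu} #ι * ⨆ i, Cardinal.lift.{vv} #(f i) := Cardinal.mk_iUnion_le_lift f
    have hsup : (⨆ i, Cardinal.lift.{vv} #(f i)) ≤ (ℵ₀ : Cardinal.{max uu vv}) :=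
      ciSup_le' fun i => by
        rw [show (ℵ₀ : Cardinal.{max uu vv}) = Cardinal.lift.{vv} (ℵ₀ : Cardinal.{uu}) from
          (Cardinal.lift_aleph0).symm]
        exact Cardinal.lift_le.2 (Cardinal.le_aleph0_iff_set_countable.2 (hcf i))
    have hmul : Cardinal.lift.{uu} #ι * (⨆ i, Cardinal.lift.{vv} #(f i)) ≤
        Cardinal.lift.{uu} (Cardinal.aleph.{vv} 1) * (ℵ₀ : Cardinal.{max uu vv}) :=
      mul_le_mul' (Cardinal.lift_le.2 hι) hsup
    have haleph0 : (ℵ₀ : Cardinal.{max uu vv}) ≤ Cardinal.lift.{uu} (Cardinal.aleph.{vv} 1) :=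
      Cardinal.aleph0_le_lift.2 (aleph0_le_aleph 1)
    have heq : Cardinal.lift.{uu} (Cardinal.aleph.{vv} 1) * (ℵ₀ : Cardinal.{max uu vv}) =
        Cardinal.lift.{uu} (Cardinal.aleph.{vv} 1) :=
      Cardinal.mul_eq_left haleph0 haleph0 Cardinal.aleph0_ne_zero
    have hlast : Cardinal.lift.{uu} (Cardinal.aleph.{vv} 1) <
        Cardinal.lift.{vv} (Cardinal.aleph.{uu} 2) := by
      rw [Cardinal.lift_aleph, Cardinal.lift_aleph, Ordinal.lift_one, Ordinal.lift_ofNat]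
      exact aleph_lt_aleph.2 one_lt_two
    exact lt_of_le_of_lt (h1.trans (hmul.trans_eq heq)) hlast
  exact Cardinal.lift_lt.1 h2

universe ww in
private lemma stmt12_aux2 {o : Ordinal.{ww}} {S : Set o.ToType} (h : #S < o.cof) :
    Set.Bounded (· < ·) S := by
  haveI : IsWellOrder o.ToType (· < ·) := isWellOrder_lt
  by_contra hb
  refine (Ordinal.lt_cof_type (s := S) fun a => ?_).not_gt (by rwa [Ordinal.cof_toType])
  by_contra ha; push_neg at ha; exact hb ⟨a, fun b hb => ha b hb⟩

/-- Given a Boolean subalgebra `B` of the power set of `ω₁` containing all finite sets, a Stone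
space `L` of `B` (via a Boolean isomorphism `e` from `B` onto the clopen algebra of `L`), a
strong almost disjoint family `(X γ)_{γ<ω₂}` inside `B`, and a family `(μ ξ)_{ξ<ω₁}` of finite
regular signed Borel measures on `L`, there is `γ' < ω₂` such that for all `γ > γ'`, all
`ξ < ω₁` and all `X ∈ B` with `X ⊆ X γ`, `μ ξ [X] = μ ξ (⋃_{l ∈ X} [{l}])`. -/
theorem stmt12
    (B : Set (Set (Cardinal.aleph 1).ord.ToType))
    (hBcompl : ∀ X ∈ B, Xᶜ ∈ B)
    (hBunion : ∀ X ∈ B, ∀ Y ∈ B, X ∪ Y ∈ B)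
    (hBfin : ∀ X : Set (Cardinal.aleph 1).ord.ToType, X.Finite → X ∈ B)
    (L : Type) [TopologicalSpace L] [CompactSpace L] [T2Space L] [TotallyDisconnectedSpace L]
    [MeasurableSpace L] [BorelSpace L]
    (e : Set (Cardinal.aleph 1).ord.ToType → Set L)
    (heclopen : ∀ X ∈ B, IsClopen (e X))
    (heinj : ∀ X ∈ B, ∀ Y ∈ B, e X = e Y → X = Y)
    (hesurj : ∀ C : Set L, IsClopen C → ∃ X ∈ B, e X = C)
    (heunion : ∀ X ∈ B, ∀ Y ∈ B, e (X ∪ Y) = e X ∪ e Y)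
    (hecompl : ∀ X ∈ B, e Xᶜ = (e X)ᶜ)
    (Xf : (Cardinal.aleph 2).ord.ToType → Set (Cardinal.aleph 1).ord.ToType)
    (hXB : ∀ γ, Xf γ ∈ B)
    (hXunc : ∀ γ, ¬ (Xf γ).Countable)
    (hXad : ∀ γ δ, γ ≠ δ → (Xf γ ∩ Xf δ).Finite)
    (μ : (Cardinal.aleph 1).ord.ToType → SignedMeasure L)
    (hreg : ∀ ξ, (μ ξ).toJordanDecomposition.posPart.Regular ∧
      (μ ξ).toJordanDecomposition.negPart.Regular) :
    ∃ γ' : (Cardinal.aleph 2).ord.ToType, ∀ γ, γ' < γ →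
      ∀ ξ : (Cardinal.aleph 1).ord.ToType, ∀ X ∈ B, X ⊆ Xf γ →
        μ ξ (e X) = μ ξ (⋃ l ∈ X, e {l}) := by
  classical
  -- `e` preserves intersections
  have hBinter : ∀ X ∈ B, ∀ Y ∈ B, X ∩ Y ∈ B := by
    intro X hX Y hY
    have := hBcompl _ (hBunion _ (hBcompl X hX) _ (hBcompl Y hY))
    simpa [Set.compl_union, compl_compl] using this
  have heinter : ∀ X ∈ B, ∀ Y ∈ B, e (X ∩ Y) = e X ∩ e Y := by
    intro X hX Y hY
    have h1 : e ((Xᶜ ∪ Yᶜ)ᶜ) = (e (Xᶜ ∪ Yᶜ))ᶜ :=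
      hecompl _ (hBunion _ (hBcompl X hX) _ (hBcompl Y hY))
    have h2 : e (Xᶜ ∪ Yᶜ) = (e X)ᶜ ∪ (e Y)ᶜ := by
      rw [heunion _ (hBcompl X hX) _ (hBcompl Y hY), hecompl X hX, hecompl Y hY]
    have h3 : (Xᶜ ∪ Yᶜ)ᶜ = X ∩ Y := by
      rw [Set.compl_union, compl_compl, compl_compl]
    rw [← h3, h1, h2, Set.compl_union, compl_compl, compl_compl]
  have hempty : e ∅ = ∅ := by
    have hem : (∅ : Set (Cardinal.aleph 1).ord.ToType) ∈ B := hBfin _ Set.finite_empty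
    have := heinter _ hem _ (hBcompl _ hem)
    rw [Set.inter_compl_self, hecompl _ hem, Set.inter_compl_self] at this
    exact this
  -- `e` is monotone on `B`
  have hmono : ∀ X ∈ B, ∀ Y ∈ B, X ⊆ Y → e X ⊆ e Y := by
    intro X hX Y hY hXY
    have : e (X ∩ Y) = e X ∩ e Y := heinter _ hX _ hY
    rw [Set.inter_eq_left.mpr hXY] at this
    rw [this]
    exact Set.inter_subset_right
  -- `e` of a finite set is the union of the `e` of singletons
  have hefin : ∀ F : Set (Cardinal.aleph 1).ord.ToType, F.Finite →
      e F = ⋃ l ∈ F, e {l} := by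
    intro F hF
    refine Set.Finite.induction_on (motive := fun F _ => e F = ⋃ l ∈ F, e {l}) F hF
      (by simpa using hempty) ?_
    intro a s has hs ih
    rw [Set.biUnion_insert, Set.insert_eq,
      heunion _ (hBfin _ (Set.finite_singleton a)) _ (hBfin _ hs), ih]
  -- singleton clopens
  have hsing : ∀ l, IsClopen (e {l}) := fun l =>
    heclopen _ (hBfin _ (Set.finite_singleton l))
  -- the remainder sets
  set R : (Cardinal.aleph 2).ord.ToType → Set L :=
    fun γ => e (Xf γ) \ ⋃ l ∈ Xf γ, e {l} with hR
  have hUopen : ∀ γ, IsOpen (⋃ l ∈ Xf γ, e {l}) :=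
    fun γ => isOpen_biUnion fun l _ => (hsing l).2
  have hRmeas : ∀ γ, MeasurableSet (R γ) := fun γ =>
    (heclopen _ (hXB γ)).2.measurableSet.diff (hUopen γ).measurableSet
  have hRdisj : Pairwise (Function.onFun Disjoint R) := by
    intro γ δ hγδ
    rw [Function.onFun, Set.disjoint_left]
    rintro x ⟨hx1, hx2⟩ ⟨hx3, _⟩
    have hxin : x ∈ e (Xf γ ∩ Xf δ) := by
      rw [heinter _ (hXB γ) _ (hXB δ)]; exact ⟨hx1, hx3⟩
    rw [hefin _ (hXad γ δ hγδ)] at hxin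
    obtain ⟨l, hl, hxl⟩ := Set.mem_iUnion₂.1 hxin
    exact hx2 (Set.mem_biUnion hl.1 hxl)
  -- bad sets are countable for each ξ
  haveI hfin : ∀ ξ, IsFiniteMeasure ((μ ξ).totalVariation) := by
    intro ξ
    unfold SignedMeasure.totalVariation
    infer_instance
  have hcount : ∀ ξ, Set.Countable {γ | 0 < (μ ξ).totalVariation (R γ)} := by
    intro ξ
    haveI := hfin ξ
    exact MeasureTheory.Measure.countable_meas_pos_of_disjoint_iUnion hRmeas hRdisj
  -- the full bad set is small
  set Bad : Set (Cardinal.aleph 2).ord.ToType :=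
    ⋃ ξ, {γ | 0 < (μ ξ).totalVariation (R γ)} with hBad
  haveI : Nonempty (Cardinal.aleph 1).ord.ToType := by
    refine Ordinal.nonempty_toType_iff.2 fun h => ?_
    exact (aleph_pos 1).ne' (Cardinal.ord_eq_zero.1 h)
  have hBadcard : #Bad < Cardinal.aleph 2 := by
    rw [hBad]
    exact stmt12_aux _ hcount (by rw [Cardinal.mk_toType, Cardinal.card_ord])
  -- the bad set is bounded
  have hcof : ((Cardinal.aleph 2).ord).cof = Cardinal.aleph 2 := by
    have h2 : (2 : Ordinal) = Order.succ 1 := by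
      rw [Order.succ_eq_add_one, one_add_one_eq_two]
    rw [h2]
    exact (Cardinal.isRegular_aleph_succ 1).cof_eq
  obtain ⟨γ', hγ'⟩ := stmt12_aux2 (S := Bad) (by rw [hcof]; exact hBadcard)
  refine ⟨γ', fun γ hγ ξ X hX hXsub => ?_⟩
  have hγBad : γ ∉ Bad := fun h => absurd (hγ' γ h) (not_lt.2 hγ.le)
  have hTV : (μ ξ).totalVariation (R γ) = 0 := by
    by_contra h
    exact hγBad (Set.mem_iUnion.2 ⟨ξ, pos_iff_ne_zero.mpr h⟩)
  have hUmeas : MeasurableSet (⋃ l ∈ X, e {l}) :=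
    (isOpen_biUnion fun l _ => (hsing l).2).measurableSet
  have hUsub : (⋃ l ∈ X, e {l}) ⊆ e X :=
    Set.iUnion₂_subset fun l hl =>
      hmono _ (hBfin _ (Set.finite_singleton l)) _ hX (Set.singleton_subset_iff.2 hl)
  have hdiff : e X \ ⋃ l ∈ X, e {l} ⊆ R γ := by
    rintro x ⟨hx1, hx2⟩
    refine ⟨hmono _ hX _ (hXB γ) hXsub hx1, fun hxU => ?_⟩
    obtain ⟨l, hl, hxl⟩ := Set.mem_iUnion₂.1 hxU
    by_cases hlX : l ∈ X
    · exact hx2 (Set.mem_biUnion hlX hxl)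
    · have h1 : e ({l} ∩ X) = e {l} ∩ e X :=
        heinter _ (hBfin _ (Set.finite_singleton l)) _ hX
      rw [Set.singleton_inter_eq_empty.mpr hlX, hempty] at h1
      exact absurd h1.symm (Set.nonempty_iff_ne_empty.1 ⟨x, hxl, hx1⟩)
  have hnull : μ ξ (e X \ ⋃ l ∈ X, e {l}) = 0 :=
    SignedMeasure.null_of_totalVariation_zero _
      (le_antisymm ((measure_mono hdiff).trans hTV.le) zero_le)
  have hsplit : e X = (⋃ l ∈ X, e {l}) ∪ (e X \ ⋃ l ∈ X, e {l}) :=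
    (Set.union_diff_cancel hUsub).symm
  conv_lhs => rw [hsplit]
  rw [VectorMeasure.of_union Set.disjoint_sdiff_right hUmeas
    ((heclopen X hX).2.measurableSet.diff hUmeas), hnull, add_zero]
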